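/- Let m be a positive integer and let X be a ±1 sequence of length 4m² such that P_X(k) = 0 for every k with 1 ≤ k ≤ 4m² - 1, and suppose ω(X) = 2m² - m. Let a = ω(B) be the Hamming weight of the first half B of X and b = ω(C) the Hamming weight of the second half C of X. Then b = 2m² - m - a and (m² - m)/2 ≤ a ≤ (3m² - m)/2. -/

import Mathlib

/-- A ±1 sequence of length `n`. -/
def IsPM (n : ℕ) (X : ZMod n → ℤ) : Prop := ∀ i, X i = 1 ∨ X i = -1

/-- The Hamming weight: the number of indices where the sequence is `1`. -/
noncomputable def wt (n : ℕ) (X : ZMod n → ℤ) : ℕ := {i | X i = 1}.ncard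

/-- The periodic autocorrelation of `X` at shift `k`:
`P_X(k) = Σ_{i=0}^{n-1} (X i) * (X (i + k))`, indices modulo `n`. -/
def pac (n : ℕ) (X : ZMod n → ℤ) (k : ℤ) : ℤ :=
  ∑ i ∈ Finset.range n, X (i : ZMod n) * X ((i : ZMod n) + (k : ZMod n))

/-- The first half of a ±1 sequence of length `2n`. -/
def firstHalf (n : ℕ) (X : ZMod (2 * n) → ℤ) : ZMod n → ℤ :=
  fun j => X ((j.val : ZMod (2 * n)))

/-- The second half of a ±1 sequence of length `2n`. -/
def secondHalf (n : ℕ) (X : ZMod (2 * n) → ℤ) : ZMod n → ℤ :=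
  fun j => X (((n + j.val : ℕ) : ZMod (2 * n)))

lemma sum_univ_zmod (n : ℕ) [NeZero n] (F : ZMod n → ℤ) :
    ∑ i : ZMod n, F i = ∑ k ∈ Finset.range n, F (k : ZMod n) := by
  refine Finset.sum_nbij' (fun i => i.val) (fun k => (k : ZMod n)) ?_ ?_ ?_ ?_ ?_ <;>
    simp [ZMod.val_lt, ZMod.natCast_val, ZMod.val_cast_of_lt, Finset.mem_range]
  exact fun a ha => Nat.mod_eq_of_lt ha

lemma wt_sum (n : ℕ) [NeZero n] (Y : ZMod n → ℤ) (hY : ∀ i, Y i = 1 ∨ Y i = -1) :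
    ∑ i : ZMod n, Y i = 2 * (wt n Y : ℤ) - n := by
  classical
  have h1 : wt n Y = (Finset.univ.filter (fun i => Y i = 1)).card := by
    rw [wt, Set.ncard_eq_toFinset_card']
    congr 1
    ext i
    simp
  have h2 : ∑ i : ZMod n, (Y i + 1) =
      ∑ i ∈ Finset.univ.filter (fun i => Y i = 1), (2 : ℤ) := by
    rw [Finset.sum_filter]
    apply Finset.sum_congr rfl
    intro i _
    rcases hY i with h | h <;> simp [h]
  rw [Finset.sum_add_distrib] at h2
  simp [Finset.card_univ, ZMod.card] at h2 ⊢
  rw [h1]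
  linarith

lemma key (n : ℕ) (hn : 0 < n) (X : ZMod (2 * n) → ℤ)
    (hX : ∀ i, X i = 1 ∨ X i = -1) (hpac : pac (2 * n) X (n : ℤ) = 0) :
    (wt n (firstHalf n X) : ℤ) + wt n (secondHalf n X) = wt (2 * n) X ∧
      2 * (wt n (secondHalf n X) : ℤ) ≤ n + 2 * wt n (firstHalf n X) ∧
      2 * (wt n (firstHalf n X) : ℤ) ≤ n + 2 * wt n (secondHalf n X) := by
  classical
  haveI : NeZero n := ⟨hn.ne'⟩
  haveI : NeZero (2 * n) := ⟨by positivity⟩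
  set f : ZMod n → ℤ := firstHalf n X with hfdef
  set g : ZMod n → ℤ := secondHalf n X with hgdef
  have hf : ∀ j, f j = 1 ∨ f j = -1 := fun j => hX _
  have hg : ∀ j, g j = 1 ∨ g j = -1 := fun j => hX _
  have hvf : ∀ k < n, f (k : ZMod n) = X ((k : ℕ) : ZMod (2 * n)) := by
    intro k hk
    simp [hfdef, firstHalf, ZMod.val_cast_of_lt hk]
  have hvg : ∀ k < n, g (k : ZMod n) = X (((n + k : ℕ)) : ZMod (2 * n)) := by
    intro k hk
    simp [hgdef, secondHalf, ZMod.val_cast_of_lt hk]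
  -- splitting a sum over range (2*n)
  have hsplit : ∀ F : ℕ → ℤ, ∑ i ∈ Finset.range (2 * n), F i
      = ∑ k ∈ Finset.range n, F k + ∑ k ∈ Finset.range n, F (n + k) := by
    intro F
    rw [Finset.range_eq_Ico, ← Finset.sum_Ico_consecutive F (Nat.zero_le n)
      (by omega : n ≤ 2 * n)]
    congr 1
    · rw [Finset.range_eq_Ico]
    rw [Finset.sum_Ico_eq_sum_range, show 2 * n - n = n by omega, Finset.range_eq_Ico]
  -- shifts
  have hshift1 : ∀ k : ℕ, ((k : ZMod (2 * n)) + (((n : ℕ) : ℤ) : ZMod (2 * n)))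
      = (((n + k : ℕ)) : ZMod (2 * n)) := by
    intro k
    push_cast
    ring
  have hshift2 : ∀ k : ℕ, ((((n + k : ℕ)) : ZMod (2 * n)) + (((n : ℕ) : ℤ) : ZMod (2 * n)))
      = ((k : ℕ) : ZMod (2 * n)) := by
    intro k
    have h0 : ((2 * n : ℕ) : ZMod (2 * n)) = 0 := ZMod.natCast_self _
    push_cast at h0 ⊢
    linear_combination h0
  -- the three sums
  have hQ : ∑ k ∈ Finset.range n, f (k : ZMod n) * g (k : ZMod n) = 0 := by
    have hs : pac (2 * n) X ((n : ℕ) : ℤ)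
        = 2 * ∑ k ∈ Finset.range n, f (k : ZMod n) * g (k : ZMod n) := by
      rw [pac, hsplit, two_mul (∑ k ∈ Finset.range n, f (k : ZMod n) * g (k : ZMod n))]
      congr 1
      · apply Finset.sum_congr rfl
        intro k hk
        rw [Finset.mem_range] at hk
        rw [hshift1, hvf k hk, hvg k hk]
      · apply Finset.sum_congr rfl
        intro k hk
        rw [Finset.mem_range] at hk
        rw [hshift2, hvf k hk, hvg k hk, mul_comm]
    rw [hs] at hpac
    linarith
  have hSf : ∑ k ∈ Finset.range n, f (k : ZMod n) = 2 * (wt n f : ℤ) - n := by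
    rw [← sum_univ_zmod, wt_sum n f hf]
  have hSg : ∑ k ∈ Finset.range n, g (k : ZMod n) = 2 * (wt n g : ℤ) - n := by
    rw [← sum_univ_zmod, wt_sum n g hg]
  have hSX : (∑ k ∈ Finset.range n, f (k : ZMod n)) + ∑ k ∈ Finset.range n, g (k : ZMod n)
      = 2 * (wt (2 * n) X : ℤ) - 2 * n := by
    have h1 : ∑ i ∈ Finset.range (2 * n), X ((i : ℕ) : ZMod (2 * n))
        = 2 * (wt (2 * n) X : ℤ) - 2 * n := by
      rw [← sum_univ_zmod, wt_sum (2 * n) X hX]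
      push_cast
      ring
    rw [hsplit] at h1
    rw [← h1]
    congr 1
    · exact Finset.sum_congr rfl fun k hk => hvf k (Finset.mem_range.mp hk)
    · exact Finset.sum_congr rfl fun k hk => hvg k (Finset.mem_range.mp hk)
  -- mixed nonnegative sums
  have e5 : (0 : ℤ) ≤ (n : ℤ) + (∑ k ∈ Finset.range n, f (k : ZMod n))
      - (∑ k ∈ Finset.range n, g (k : ZMod n))
      - ∑ k ∈ Finset.range n, f (k : ZMod n) * g (k : ZMod n) := by
    have h0 : (0 : ℤ) ≤ ∑ k ∈ Finset.range n, (1 + f (k : ZMod n)) * (1 - g (k : ZMod n)) := by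
      apply Finset.sum_nonneg
      intro k _
      rcases hf (k : ZMod n) with h | h <;> rcases hg (k : ZMod n) with h' | h' <;>
        simp [h, h']
    have he : ∑ k ∈ Finset.range n, (1 + f (k : ZMod n)) * (1 - g (k : ZMod n))
        = (n : ℤ) + (∑ k ∈ Finset.range n, f (k : ZMod n))
          - (∑ k ∈ Finset.range n, g (k : ZMod n))
          - ∑ k ∈ Finset.range n, f (k : ZMod n) * g (k : ZMod n) := by
      rw [Finset.sum_congr rfl (fun k _ => by ring :
        ∀ k ∈ Finset.range n, (1 + f (k : ZMod n)) * (1 - g (k : ZMod n))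
          = 1 + f (k : ZMod n) - g (k : ZMod n) - f (k : ZMod n) * g (k : ZMod n)),
        Finset.sum_sub_distrib, Finset.sum_sub_distrib, Finset.sum_add_distrib]
      simp
    linarith [he ▸ h0]
  have e6 : (0 : ℤ) ≤ (n : ℤ) - (∑ k ∈ Finset.range n, f (k : ZMod n))
      + (∑ k ∈ Finset.range n, g (k : ZMod n))
      - ∑ k ∈ Finset.range n, f (k : ZMod n) * g (k : ZMod n) := by
    have h0 : (0 : ℤ) ≤ ∑ k ∈ Finset.range n, (1 - f (k : ZMod n)) * (1 + g (k : ZMod n)) := by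
      apply Finset.sum_nonneg
      intro k _
      rcases hf (k : ZMod n) with h | h <;> rcases hg (k : ZMod n) with h' | h' <;>
        simp [h, h']
    have he : ∑ k ∈ Finset.range n, (1 - f (k : ZMod n)) * (1 + g (k : ZMod n))
        = (n : ℤ) - (∑ k ∈ Finset.range n, f (k : ZMod n))
          + (∑ k ∈ Finset.range n, g (k : ZMod n))
          - ∑ k ∈ Finset.range n, f (k : ZMod n) * g (k : ZMod n) := by
      rw [Finset.sum_congr rfl (fun k _ => by ring :
        ∀ k ∈ Finset.range n, (1 - f (k : ZMod n)) * (1 + g (k : ZMod n))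
          = 1 - f (k : ZMod n) + g (k : ZMod n) - f (k : ZMod n) * g (k : ZMod n)),
        Finset.sum_sub_distrib, Finset.sum_add_distrib, Finset.sum_sub_distrib]
      simp
    linarith [he ▸ h0]
  rw [hSf, hSg, hQ] at e5 e6
  rw [hSf, hSg] at hSX
  refine ⟨by linarith, by linarith, by linarith⟩

theorem stmt11 (m : ℕ) (hm : 0 < m)
    (X : ZMod (2 * (2 * m ^ 2)) → ℤ) (hX : IsPM (2 * (2 * m ^ 2)) X)
    (hH : ∀ k : ℤ, 1 ≤ k → k ≤ 4 * (m : ℤ) ^ 2 - 1 → pac (2 * (2 * m ^ 2)) X k = 0)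
    (hw : (wt (2 * (2 * m ^ 2)) X : ℤ) = 2 * (m : ℤ) ^ 2 - m)
    (a b : ℕ) (ha : a = wt (2 * m ^ 2) (firstHalf (2 * m ^ 2) X))
    (hb : b = wt (2 * m ^ 2) (secondHalf (2 * m ^ 2) X)) :
    (b : ℤ) = 2 * (m : ℤ) ^ 2 - m - a ∧
      ((m : ℤ) ^ 2 - m) / 2 ≤ (a : ℤ) ∧ (a : ℤ) ≤ (3 * (m : ℤ) ^ 2 - m) / 2 := by
  have hm1 : (1 : ℤ) ≤ (m : ℤ) := by exact_mod_cast hm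
  have hpac : pac (2 * (2 * m ^ 2)) X ((2 * m ^ 2 : ℕ) : ℤ) = 0 := by
    apply hH
    · push_cast
      nlinarith
    · push_cast
      nlinarith
  obtain ⟨h1, h2, h3⟩ := key (2 * m ^ 2) (by positivity) X hX hpac
  rw [← ha, ← hb] at h1 h2 h3
  rw [hw] at h1
  have hNval : ((2 * m ^ 2 : ℕ) : ℤ) = 2 * (m : ℤ) ^ 2 := by push_cast; ring
  rw [hNval] at h2 h3
  obtain ⟨t, ht⟩ : Even ((m : ℤ) ^ 2 - m) := by
    have h := Int.even_mul_succ_self ((m : ℤ) - 1)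
    have h' : ((m : ℤ) - 1) * ((m : ℤ) - 1 + 1) = (m : ℤ) ^ 2 - m := by ring
    rwa [h'] at h
  have hd1 : ((m : ℤ) ^ 2 - m) / 2 = t := by omega
  have hd2 : (3 * (m : ℤ) ^ 2 - m) / 2 = t + (m : ℤ) ^ 2 := by
    have : 3 * (m : ℤ) ^ 2 - m = (t + (m : ℤ) ^ 2) + (t + (m : ℤ) ^ 2) := by linarith
    omega
  refine ⟨by linarith, ?_, ?_⟩
  · rw [hd1]; linarith
  · rw [hd2]; linarith
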